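/- Let X be a totally bounded separable metric space and let Λ be a normalized positive linear functional on C_b(X). Then there exists a sequence (P_n)_{n∈ℕ} of finitely supported Borel probability measures on X such that ∫ f dP_n → Λ f as n → ∞ for every uniformly continuous f ∈ C_b(X). -/

import Mathlib

open MeasureTheory Filter Topology

section aux

variable {X : Type*} [MetricSpace X] [MeasurableSpace X] [BorelSpace X]

private lemma abs_lin_le (Λ : BoundedContinuousFunction X ℝ →ₗ[ℝ] ℝ)
    (hpos : ∀ f : BoundedContinuousFunction X ℝ, 0 ≤ f → 0 ≤ Λ f)
    (g h : BoundedContinuousFunction X ℝ) (hgh : ∀ x, |g x| ≤ h x) :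
    |Λ g| ≤ Λ h := by
  have h1 : 0 ≤ Λ (h - g) := by
    refine hpos _ fun x => ?_
    have := abs_le.mp (hgh x)
    show (0 : ℝ) ≤ h x - g x
    linarith [this.2]
  have h2 : 0 ≤ Λ (h + g) := by
    refine hpos _ fun x => ?_
    have := abs_le.mp (hgh x)
    show (0 : ℝ) ≤ h x + g x
    linarith [this.1]
  rw [map_sub] at h1
  rw [map_add] at h2
  rw [abs_le]
  constructor <;> linarith

private lemma key_lemma
    (hX : TotallyBounded (Set.univ : Set X))
    (Λ : BoundedContinuousFunction X ℝ →ₗ[ℝ] ℝ)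
    (hpos : ∀ f : BoundedContinuousFunction X ℝ, 0 ≤ f → 0 ≤ Λ f)
    (hone : Λ 1 = 1) (r : ℝ) (hr : 0 < r) :
    ∃ μ : Measure X, IsProbabilityMeasure μ ∧ (∃ s : Finset X, μ ↑s = 1) ∧
      ∀ (f : BoundedContinuousFunction X ℝ) (ε : ℝ), 0 ≤ ε →
        (∀ x y : X, dist x y < r → |f x - f y| ≤ ε) →
        |(∫ x, f x ∂μ) - Λ f| ≤ ε := by
  -- X is nonempty
  have hXne : Nonempty X := by
    by_contra hne
    rw [not_nonempty_iff] at hne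
    have : (1 : BoundedContinuousFunction X ℝ) = 0 := by
      ext x; exact (hne.false x).elim
    rw [this, map_zero] at hone
    exact one_ne_zero hone.symm
  -- obtain the finite cover
  obtain ⟨t0, ht0fin, ht0cov⟩ := Metric.totallyBounded_iff.mp hX r hr
  set t : Finset X := ht0fin.toFinset with ht
  have hcov : ∀ x : X, ∃ i ∈ t, dist x i < r := by
    intro x
    have := ht0cov (Set.mem_univ x)
    simp only [Set.mem_iUnion, Metric.mem_ball] at this
    obtain ⟨i, hi, hlt⟩ := this
    exact ⟨i, by simpa [ht] using hi, hlt⟩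
  -- partition of unity ingredients
  set ψ : X → X → ℝ := fun i x => max (r - dist x i) 0 with hψ
  have hψcont : ∀ i, Continuous (ψ i) := fun i =>
    ((continuous_const.sub (continuous_id.dist continuous_const))).max continuous_const
  have hψnonneg : ∀ i x, 0 ≤ ψ i x := fun i x => le_max_right _ _
  set S : X → ℝ := fun x => ∑ i ∈ t, ψ i x with hS
  have hScont : Continuous S := continuous_finset_sum _ fun i _ => hψcont i
  have hSpos : ∀ x, 0 < S x := by
    intro x
    obtain ⟨i, hi, hlt⟩ := hcov x
    exact Finset.sum_pos' (fun j _ => hψnonneg j x)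
      ⟨i, hi, lt_max_of_lt_left (by linarith)⟩
  have hψleS : ∀ i ∈ t, ∀ x, ψ i x ≤ S x := fun i hi x =>
    Finset.single_le_sum (fun j _ => hψnonneg j x) hi
  -- the partition of unity
  set φ : t → BoundedContinuousFunction X ℝ := fun i =>
    BoundedContinuousFunction.ofNormedAddCommGroup
      (fun x => ψ i x / S x)
      ((hψcont i).div hScont (fun x => (hSpos x).ne'))
      1
      (by
        intro x
        rw [Real.norm_eq_abs, abs_of_nonneg (div_nonneg (hψnonneg _ x) (hSpos x).le)]
        rw [div_le_one (hSpos x)]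
        exact hψleS i i.2 x) with hφ
  have hφapp : ∀ (i : t) (x : X), φ i x = ψ i x / S x := fun i x => rfl
  have hφnonneg : ∀ (i : t) (x : X), 0 ≤ φ i x := fun i x =>
    div_nonneg (hψnonneg _ x) (hSpos x).le
  have hφ0 : ∀ i : t, 0 ≤ φ i := by
    intro i x
    simpa using hφnonneg i x
  have hφsum : ∑ i : t, φ i = 1 := by
    ext x
    rw [BoundedContinuousFunction.coe_sum]
    simp only [Finset.sum_apply, BoundedContinuousFunction.coe_one, Pi.one_apply]
    have : ∑ i : t, φ i x = ∑ i : t, ψ i x / S x := rfl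
    rw [this, ← Finset.sum_div, Finset.sum_coe_sort t (fun i => ψ i x)]
    exact div_self (hSpos x).ne'
  -- the coefficients
  set c : t → ℝ := fun i => Λ (φ i) with hc
  have hcnonneg : ∀ i, 0 ≤ c i := fun i => hpos _ (hφ0 i)
  have hcsum : ∑ i : t, c i = 1 := by
    rw [hc]
    rw [← map_sum Λ φ Finset.univ, hφsum, hone]
  -- the measure
  set μ : Measure X := ∑ i : t, ENNReal.ofReal (c i) • Measure.dirac (i : X) with hμ
  have happly : ∀ s : Set X, μ s = ∑ i : t, ENNReal.ofReal (c i) * Measure.dirac (i : X) s := by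
    intro s
    rw [hμ, Measure.coe_finset_sum]
    simp [Measure.smul_apply]
  have hμuniv : μ Set.univ = 1 := by
    rw [happly]
    simp only [MeasureTheory.measure_univ, mul_one]
    rw [← ENNReal.ofReal_sum_of_nonneg (fun i _ => hcnonneg i), hcsum, ENNReal.ofReal_one]
  have hprob : IsProbabilityMeasure μ := ⟨hμuniv⟩
  have hsupp : μ ↑t = 1 := by
    rw [happly]
    have : ∀ i : t, Measure.dirac (i : X) (↑t : Set X) = 1 := fun i =>
      Measure.dirac_apply_of_mem (by simpa using i.2)
    simp only [this, mul_one]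
    rw [← ENNReal.ofReal_sum_of_nonneg (fun i _ => hcnonneg i), hcsum, ENNReal.ofReal_one]
  refine ⟨μ, hprob, ⟨t, hsupp⟩, ?_⟩
  intro f ε hε hf
  -- integral computation
  have hint : ∫ x, f x ∂μ = ∑ i : t, c i * f i := by
    rw [hμ, integral_finset_sum_measure]
    · refine Finset.sum_congr rfl fun i _ => ?_
      rw [integral_smul_measure, integral_dirac, ENNReal.toReal_ofReal (hcnonneg i),
        smul_eq_mul]
    · intro i _
      exact (f.integrable _).smul_measure ENNReal.ofReal_ne_top
  -- the error terms
  set g : t → BoundedContinuousFunction X ℝ := fun i => φ i * f - f i • φ i with hg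
  have hgapp : ∀ (i : t) (x : X), g i x = φ i x * (f x - f i) := by
    intro i x
    simp only [hg, BoundedContinuousFunction.coe_sub, Pi.sub_apply,
      BoundedContinuousFunction.coe_mul, Pi.mul_apply,
      BoundedContinuousFunction.coe_smul, Pi.smul_apply, smul_eq_mul]
    ring
  have hgb : ∀ (i : t) (x : X), |g i x| ≤ ε * φ i x := by
    intro i x
    rw [hgapp, abs_mul, abs_of_nonneg (hφnonneg i x)]
    rcases eq_or_lt_of_le (hφnonneg i x) with h0 | h0
    · rw [← h0]; simp
    · have hψpos : 0 < ψ i x := by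
        by_contra hc'
        push_neg at hc'
        have : ψ i x = 0 := le_antisymm hc' (hψnonneg _ x)
        rw [hφapp, this, zero_div] at h0
        exact lt_irrefl _ h0
      have hdist : dist x (i : X) < r := by
        by_contra hd
        push_neg at hd
        have : ψ i x = 0 := max_eq_right (by linarith)
        rw [this] at hψpos; exact lt_irrefl _ hψpos
      have := hf x (i : X) hdist
      calc φ i x * |f x - f i| ≤ φ i x * ε := by
            exact mul_le_mul_of_nonneg_left this (hφnonneg i x)
        _ = ε * φ i x := mul_comm _ _
  have hgΛ : ∀ i : t, |Λ (g i)| ≤ ε * c i := by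
    intro i
    have := abs_lin_le Λ hpos (g i) (ε • φ i) (fun x => by
      simpa using hgb i x)
    rwa [Λ.map_smul, smul_eq_mul] at this
  -- sum of error terms
  have hΛf : Λ f = ∑ i : t, Λ (φ i * f) := by
    rw [← map_sum]
    congr 1
    rw [← Finset.sum_mul, hφsum, one_mul]
  have hgΛeq : ∀ i : t, Λ (g i) = Λ (φ i * f) - f i * c i := by
    intro i
    rw [hg]
    simp only
    rw [map_sub, Λ.map_smul, smul_eq_mul]
  have key : (∫ x, f x ∂μ) - Λ f = -∑ i : t, Λ (g i) := by
    rw [hint, hΛf]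
    rw [Finset.sum_congr rfl (fun i _ => hgΛeq i)]
    rw [Finset.sum_sub_distrib]
    have : ∑ i : t, f i * c i = ∑ i : t, c i * f i :=
      Finset.sum_congr rfl fun i _ => mul_comm _ _
    rw [this]
    ring
  rw [key, abs_neg]
  calc |∑ i : t, Λ (g i)| ≤ ∑ i : t, |Λ (g i)| := Finset.abs_sum_le_sum_abs _ _
    _ ≤ ∑ i : t, ε * c i := Finset.sum_le_sum fun i _ => hgΛ i
    _ = ε * ∑ i : t, c i := by rw [Finset.mul_sum]
    _ = ε := by rw [hcsum, mul_one]

end aux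

/-- On a totally bounded separable metric space, every normalized positive
linear functional on `C_b(X)` is a weak limit (against bounded uniformly continuous test
functions) of a sequence of finitely supported Borel probability measures. -/
theorem exists_finitely_supported_seq_tendsto_functional
    {X : Type*} [MetricSpace X] [TopologicalSpace.SeparableSpace X]
    [MeasurableSpace X] [BorelSpace X]
    (hX : TotallyBounded (Set.univ : Set X))
    (Λ : BoundedContinuousFunction X ℝ →ₗ[ℝ] ℝ)
    (hpos : ∀ f : BoundedContinuousFunction X ℝ, 0 ≤ f → 0 ≤ Λ f)
    (hone : Λ 1 = 1) :
    ∃ P : ℕ → Measure X,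
      (∀ n, IsProbabilityMeasure (P n)) ∧
      (∀ n, ∃ s : Finset X, P n ↑s = 1) ∧
      (∀ f : BoundedContinuousFunction X ℝ, UniformContinuous ⇑f →
        Tendsto (fun n => ∫ x, f x ∂(P n)) atTop (𝓝 (Λ f))) := by
  have hkey := fun n : ℕ => key_lemma hX Λ hpos hone (1 / (n + 1 : ℝ))
    (by positivity)
  choose P hP1 hP2 hP3 using hkey
  refine ⟨P, hP1, hP2, ?_⟩
  intro f hf
  rw [Metric.tendsto_atTop]
  intro ε hε
  obtain ⟨δ, hδ, hδf⟩ := Metric.uniformContinuous_iff.mp hf (ε / 2) (by linarith)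
  obtain ⟨N, hN⟩ := exists_nat_one_div_lt hδ
  refine ⟨N, fun n hn => ?_⟩
  have hle : (1 : ℝ) / (n + 1) ≤ 1 / (N + 1) := by
    apply one_div_le_one_div_of_le (by positivity)
    exact_mod_cast add_le_add_left (Nat.cast_le.mpr hn) 1
  have hest := hP3 n f (ε / 2) (by linarith) (fun x y hxy => by
    have : dist x y < δ := lt_of_lt_of_le hxy (hle.trans hN.le)
    have := hδf this
    rw [Real.dist_eq] at this
    linarith)
  rw [Real.dist_eq]
  calc |(∫ x, f x ∂P n) - Λ f| ≤ ε / 2 := hest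
    _ < ε := by linarith
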